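/- For any A ∈ SL(2,ℝ), one has ‖A²‖/‖A‖ − 3 ≤ |2 − tr(A)| ≤ ‖A²‖/‖A‖ + 3 ≤ ‖A‖ + 3, where ‖·‖ is the operator norm. -/

import Mathlib

open scoped Matrix.Norms.L2Operator
section
open Matrix

/-- For `A ∈ SL(2,ℝ)` (i.e. `det A = 1`), with `‖·‖` the (ℓ²) operator norm,
`‖A²‖/‖A‖ − 3 ≤ |2 − tr A| ≤ ‖A²‖/‖A‖ + 3 ≤ ‖A‖ + 3`. -/
theorem trace_bounds_of_SL2 (A : Matrix (Fin 2) (Fin 2) ℝ) (hA : A.det = 1) :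
    ‖A ^ 2‖ / ‖A‖ - 3 ≤ |2 - A.trace| ∧
      |2 - A.trace| ≤ ‖A ^ 2‖ / ‖A‖ + 3 ∧
        ‖A ^ 2‖ / ‖A‖ + 3 ≤ ‖A‖ + 3 := by
  set J : Matrix (Fin 2) (Fin 2) ℝ := !![0,-1;1,0] with hJ
  set J' : Matrix (Fin 2) (Fin 2) ℝ := !![0,1;-1,0] with hJ'
  -- J is orthogonal, so its operator norm is 1
  have hJ2 : Jᴴ * J = 1 := by
    ext i j
    fin_cases i <;> fin_cases j <;>
      simp [hJ, Matrix.mul_apply, Fin.sum_univ_two, Matrix.one_apply,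
        Matrix.vecHead, Matrix.vecTail]
  have hJn : ‖J‖ = 1 := by
    have h := Matrix.l2_opNorm_conjTranspose_mul_self J
    rw [hJ2, norm_one] at h
    nlinarith [norm_nonneg J]
  have hJ'eq : J' = Jᴴ := by
    ext i j
    fin_cases i <;> fin_cases j <;>
      simp [hJ, hJ', Matrix.vecHead, Matrix.vecTail]
  have hJ'n : ‖J'‖ = 1 := by rw [hJ'eq, Matrix.l2_opNorm_conjTranspose, hJn]
  have hTn : ‖Aᵀ‖ = ‖A‖ := by
    rw [← Matrix.l2_opNorm_conjTranspose A, Matrix.conjTranspose_eq_transpose_of_trivial]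
  -- the adjugate (= inverse) is an orthogonal conjugate of the transpose
  have hadj : A.adjugate = J * Aᵀ * J' := by
    rw [Matrix.eta_fin_two A, Matrix.adjugate_fin_two]
    ext i j
    fin_cases i <;> fin_cases j <;>
      simp [hJ, hJ', Matrix.mul_apply, Fin.sum_univ_two, Matrix.vecHead, Matrix.vecTail,
        Matrix.vecMul, dotProduct]
  have hadjn : ‖A.adjugate‖ ≤ ‖A‖ := by
    rw [hadj]
    calc ‖J * Aᵀ * J'‖ ≤ ‖J * Aᵀ‖ * ‖J'‖ := Matrix.l2_opNorm_mul _ _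
      _ ≤ ‖J‖ * ‖Aᵀ‖ * ‖J'‖ := by
          have := Matrix.l2_opNorm_mul J Aᵀ
          nlinarith [norm_nonneg J', norm_nonneg (J * Aᵀ)]
      _ = ‖A‖ := by rw [hJn, hJ'n, hTn]; ring
  have hmuladj : A * A.adjugate = 1 := by rw [Matrix.mul_adjugate, hA, one_smul]
  have hN1 : 1 ≤ ‖A‖ := by
    have h1 : (1 : ℝ) = ‖A * A.adjugate‖ := by rw [hmuladj, norm_one]
    have h2 := Matrix.l2_opNorm_mul A A.adjugate
    nlinarith [norm_nonneg A, norm_nonneg A.adjugate]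
  have hN0 : (0 : ℝ) < ‖A‖ := lt_of_lt_of_le one_pos hN1
  -- Cayley–Hamilton: A² = (tr A) • A - 1
  have hCH : A ^ 2 = A.trace • A - 1 := by
    rw [Matrix.det_fin_two] at hA
    rw [sq]
    ext i j
    fin_cases i <;> fin_cases j <;>
      simp [Matrix.mul_apply, Fin.sum_univ_two, Matrix.trace_fin_two, Matrix.one_apply] <;>
      nlinarith [hA]
  set t := A.trace with ht
  have hsmul : ‖t • A‖ = |t| * ‖A‖ := by rw [norm_smul]; simp
  have hupper : ‖A ^ 2‖ ≤ |t| * ‖A‖ + 1 := by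
    calc ‖A ^ 2‖ = ‖t • A - 1‖ := by rw [hCH]
      _ ≤ ‖t • A‖ + ‖(1 : Matrix (Fin 2) (Fin 2) ℝ)‖ := norm_sub_le _ _
      _ = |t| * ‖A‖ + 1 := by rw [hsmul, norm_one]
  have hlower : |t| * ‖A‖ - 1 ≤ ‖A ^ 2‖ := by
    have h1 : t • A = A ^ 2 + 1 := by rw [hCH, sub_add_cancel]
    have h2 : ‖t • A‖ ≤ ‖A ^ 2‖ + 1 := by
      calc ‖t • A‖ = ‖A ^ 2 + 1‖ := by rw [h1]
        _ ≤ ‖A ^ 2‖ + ‖(1 : Matrix (Fin 2) (Fin 2) ℝ)‖ := norm_add_le _ _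
        _ = ‖A ^ 2‖ + 1 := by rw [norm_one]
    linarith [hsmul ▸ h2]
  have hsq : ‖A ^ 2‖ ≤ ‖A‖ * ‖A‖ := by
    rw [sq]; exact Matrix.l2_opNorm_mul A A
  have hx : ‖A ^ 2‖ / ‖A‖ * ‖A‖ = ‖A ^ 2‖ := div_mul_cancel₀ _ (ne_of_gt hN0)
  have habs1 : |t| - 2 ≤ |2 - t| := by
    have := abs_sub_abs_le_abs_sub t 2
    rw [abs_sub_comm] at this
    simp only [abs_two] at this
    linarith
  have habs2 : |2 - t| ≤ 2 + |t| := by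
    have := abs_sub (2 : ℝ) t
    simp only [abs_two] at this
    linarith
  have habs0 : 0 ≤ |t| := abs_nonneg t
  have hdiv : ∀ u v : ℝ, u * ‖A‖ ≤ v * ‖A‖ + 1 → u ≤ v + 1 := by
    intro u v h
    rcases le_or_gt u v with h' | h'
    · linarith
    · have h1 : (u - v) * 1 ≤ (u - v) * ‖A‖ :=
        mul_le_mul_of_nonneg_left hN1 (by linarith)
      have h2 : (u - v) * ‖A‖ = u * ‖A‖ - v * ‖A‖ := by ring
      linarith
  refine ⟨?_, ?_, ?_⟩
  · have : ‖A ^ 2‖ / ‖A‖ ≤ |t| + 1 := hdiv _ _ (by rw [hx]; exact hupper)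
    linarith
  · have : |t| ≤ ‖A ^ 2‖ / ‖A‖ + 1 := hdiv _ _ (by rw [hx]; linarith)
    linarith
  · have : ‖A ^ 2‖ / ‖A‖ ≤ ‖A‖ := by
      rw [div_le_iff₀ hN0]; exact hsq
    linarith

end
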